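/- arXiv:1405.5704 — 2 statements merged into one kernel-verified Lean document; each statement's English description precedes it below -/
import Mathlib

section
/- In the mafia-fraud model, for all 2 ≤ i ≤ n: Pr(S_i | C_i ≠ C̃_i, M_i) = 1/2 + (1/2) · Pr(c_i = c̃_i | C_i ≠ C̃_i, M_i), and moreover Pr(c_i = c̃_i | C_i ≠ C̃_i, M_i) = [ Pr(S_{i−1} | M_{i−1}, C_{i−1} ≠ C̃_{i−1}) · Pr(M_{i−1} | C_{i−1} ≠ C̃_{i−1}) · ( 1/2 − (1/2)^i ) ] / [ Pr(M_i | C_i ≠ C̃_i) · (1 − (1/2)^i) ], with the stopping condition Pr(S_1 | C_1 ≠ C̃_1, M_1) = 1/2. -/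
/-!  The mafia-fraud model of the paper.  Bits are elements of `ZMod 2`
(XOR is `+`, AND is `*`).  A sample point consists of the uniformly
distributed, mutually independent `n`-bit strings
`Q, R⁰, R¹, c̃, c, b` (key register, answer registers, adversary's pre-ask
challenges, verifier's challenges, adversary's random answer bits). -/

/-- Sample space: `(Q, R⁰, R¹, c̃, c, b)`. -/
abbrev MafiaΩ (n : ℕ) :=
  (Fin n → ZMod 2) × (Fin n → ZMod 2) × (Fin n → ZMod 2) ×
  (Fin n → ZMod 2) × (Fin n → ZMod 2) × (Fin n → ZMod 2)

namespace Mafia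

variable {n : ℕ}

def keyQ (ω : MafiaΩ n) : Fin n → ZMod 2 := ω.1
def reg0 (ω : MafiaΩ n) : Fin n → ZMod 2 := ω.2.1
def reg1 (ω : MafiaΩ n) : Fin n → ZMod 2 := ω.2.2.1
/-- `c̃`, the challenges the adversary sends to the prover. -/
def cAdv (ω : MafiaΩ n) : Fin n → ZMod 2 := ω.2.2.2.1
/-- `c`, the verifier's challenges. -/
def cVer (ω : MafiaΩ n) : Fin n → ZMod 2 := ω.2.2.2.2.1
/-- `b`, the adversary's random answer bits. -/
def bAdv (ω : MafiaΩ n) : Fin n → ZMod 2 := ω.2.2.2.2.2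

/-- `f_Q` applied to the length-`i` prefix of the challenge string `c`. -/
def fQ (Q c : Fin n → ZMod 2) (i : ℕ) : ZMod 2 :=
  ∑ j : Fin n, if (j : ℕ) < i then c j * Q j else 0

/-- `R_j^{b}`: the register bit selected by the bit `b` at round `j+1`. -/
def reg (ω : MafiaΩ n) (b : ZMod 2) (j : Fin n) : ZMod 2 :=
  if b = 0 then reg0 ω j else reg1 ω j

/-- The prover's response `r̃` to the adversary at round `j+1`:
`r̃ = R_j^{c̃_j} ⊕ f_Q(C̃_j)`. -/
def resp (ω : MafiaΩ n) (j : Fin n) : ZMod 2 :=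
  reg ω (cAdv ω j) j + fQ (keyQ ω) (cAdv ω) ((j : ℕ) + 1)

/-- The adversary's answer to the verifier at round `j+1`: it relays `r̃` when
`c_j = c̃_j` and answers with the random bit `b_j` otherwise. -/
def ans (ω : MafiaΩ n) (j : Fin n) : ZMod 2 :=
  if cVer ω j = cAdv ω j then resp ω j else bAdv ω j

/-- The correct answer expected by the verifier at round `j+1`. -/
def corr (ω : MafiaΩ n) (j : Fin n) : ZMod 2 :=
  reg ω (cVer ω j) j + fQ (keyQ ω) (cVer ω) ((j : ℕ) + 1)

/-- `M_i`: the adversary wins the first `i` rounds. -/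
def M (i : ℕ) (ω : MafiaΩ n) : Prop :=
  ∀ j : Fin n, (j : ℕ) < i → ans ω j = corr ω j

/-- `S_i`: the guess `f_Q(C_i) ⊕ f_Q(C̃_i) = 0` is correct at round `i`. -/
def S (i : ℕ) (ω : MafiaΩ n) : Prop :=
  fQ (keyQ ω) (cVer ω) i = fQ (keyQ ω) (cAdv ω) i

/-- The event `C_i ≠ C̃_i`. -/
def Cne (i : ℕ) (ω : MafiaΩ n) : Prop :=
  ∃ j : Fin n, (j : ℕ) < i ∧ cVer ω j ≠ cAdv ω j

open Classical in
/-- Probability of an event under the uniform distribution on `MafiaΩ n`. -/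
noncomputable def pr (n : ℕ) (E : MafiaΩ n → Prop) : ℚ :=
  ((Finset.univ.filter E).card : ℚ) / ((Finset.univ : Finset (MafiaΩ n)).card : ℚ)

/-- Conditional probability `Pr(A | B)`. -/
noncomputable def cpr (n : ℕ) (A B : MafiaΩ n → Prop) : ℚ :=
  pr n (fun ω => A ω ∧ B ω) / pr n B

end Mafia


namespace Mafia

/-- The event `c_i = c̃_i` (the `i`-th challenges agree, `i ≥ 1`). -/
def lastEq (i : ℕ) (ω : MafiaΩ n) : Prop :=
  ∀ j : Fin n, (j : ℕ) + 1 = i → cVer ω j = cAdv ω j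

end Mafia

-- ============ auxiliary development ============
section Gen
open Finset
variable {α : Type*} [Fintype α]

open Classical in
lemma card_filter_eq_of_invol (φ : α → α) (hφ : ∀ a, φ (φ a) = a)
    (P Q : α → Prop) (h1 : ∀ a, P a → Q (φ a)) (h2 : ∀ a, Q a → P (φ a)) :
    (univ.filter P).card = (univ.filter Q).card := by
  refine Finset.card_nbij' φ φ ?_ ?_ ?_ ?_
  · intro a ha
    simp only [mem_coe, mem_filter, mem_univ, true_and] at ha ⊢
    exact h1 a ha
  · intro a ha
    simp only [mem_coe, mem_filter, mem_univ, true_and] at ha ⊢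
    exact h2 a ha
  · intro a _; exact hφ a
  · intro a _; exact hφ a

open Classical in
lemma card_filter_split (P R : α → Prop) [DecidablePred P]
    [DecidablePred fun a => P a ∧ R a] [DecidablePred fun a => P a ∧ ¬ R a] :
    (univ.filter P).card
      = (univ.filter fun a => P a ∧ R a).card + (univ.filter fun a => P a ∧ ¬ R a).card := by
  rw [Finset.card_filter, Finset.card_filter, Finset.card_filter, ← Finset.sum_add_distrib]
  refine Finset.sum_congr rfl fun a _ => ?_
  by_cases hP : P a <;> by_cases hR : R a <;> simp [hP, hR]

open Classical in
lemma card_filter_congr {P Q : α → Prop} (h : ∀ a, P a ↔ Q a) :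
    (univ.filter P).card = (univ.filter Q).card := by
  congr 1; exact Finset.filter_congr fun a _ => h a
end Gen

-- ZMod 2 facts
lemma z2_flip_ne_iff (x y : ZMod 2) : x + 1 = y ↔ x ≠ y := by revert x y; decide
lemma z2_addc (x c : ZMod 2) : x + c + c = x := by revert x c; decide
lemma z2_add_cancel_iff (x y c : ZMod 2) : x + c = y + c ↔ x = y := by revert x y c; decide
lemma z2_ne_iff (x y : ZMod 2) : x ≠ y ↔ y = x + 1 := by revert x y; decide

namespace Mafia
open Finset
variable {n : ℕ}

open Classical in
noncomputable def cnt (n : ℕ) (E : MafiaΩ n → Prop) : ℕ := (Finset.univ.filter E).card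

open Classical in
lemma pr_def (E : MafiaΩ n → Prop) :
    pr n E = (cnt n E : ℚ) / (Fintype.card (MafiaΩ n) : ℚ) := rfl

lemma cnt_congr {E F : MafiaΩ n → Prop} (h : ∀ ω, E ω ↔ F ω) : cnt n E = cnt n F :=
  card_filter_congr h

open Classical in
lemma cnt_split (E R : MafiaΩ n → Prop) :
    cnt n E = cnt n (fun ω => E ω ∧ R ω) + cnt n (fun ω => E ω ∧ ¬ R ω) := by
  unfold cnt
  rw [Finset.card_filter, Finset.card_filter, Finset.card_filter, ← Finset.sum_add_distrib]
  refine Finset.sum_congr rfl fun a _ => ?_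
  by_cases hE : E a <;> by_cases hR : R a <;> simp [hE, hR]

-- fQ lemmas
lemma fQ_succ (Q c : Fin n → ZMod 2) (k : Fin n) :
    fQ Q c ((k : ℕ) + 1) = fQ Q c (k : ℕ) + c k * Q k := by
  unfold fQ
  have h : ∀ j : Fin n, (if (j:ℕ) < (k:ℕ)+1 then c j * Q j else 0)
      = (if (j:ℕ) < (k:ℕ) then c j * Q j else 0) + (if j = k then c j * Q j else 0) := by
    intro j
    by_cases hjk : j = k
    · subst hjk; simp
    · have hne : (j:ℕ) ≠ (k:ℕ) := fun h => hjk (Fin.ext h)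
      by_cases hlt : (j:ℕ) < (k:ℕ)
      · simp [hlt, Nat.lt_succ_of_lt hlt, hjk]
      · have h2 : ¬ (j:ℕ) < (k:ℕ)+1 := by omega
        simp [hlt, hjk, h2]
  rw [Finset.sum_congr rfl (fun j _ => h j), Finset.sum_add_distrib]
  congr 1
  simp

lemma fQ_congr_c (Q c c' : Fin n → ZMod 2) (m : ℕ) (h : ∀ j : Fin n, (j:ℕ) < m → c' j = c j) :
    fQ Q c' m = fQ Q c m := by
  unfold fQ
  refine Finset.sum_congr rfl fun j _ => ?_
  by_cases hj : (j:ℕ) < m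
  · simp [hj, h j hj]
  · simp [hj]

lemma fQ_congr_Q (Q Q' c : Fin n → ZMod 2) (m : ℕ) (h : ∀ j : Fin n, (j:ℕ) < m → Q' j = Q j) :
    fQ Q' c m = fQ Q c m := by
  unfold fQ
  refine Finset.sum_congr rfl fun j _ => ?_
  by_cases hj : (j:ℕ) < m
  · simp [hj, h j hj]
  · simp [hj]

-- event successor lemmas
lemma M_succ (k : Fin n) (ω : MafiaΩ n) :
    M ((k:ℕ)+1) ω ↔ M (k:ℕ) ω ∧ ans ω k = corr ω k := by
  constructor
  · intro h
    exact ⟨fun j hj => h j (by omega), h k (by omega)⟩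
  · rintro ⟨h1, h2⟩ j hj
    rcases Nat.lt_succ_iff_lt_or_eq.1 hj with h | h
    · exact h1 j h
    · rwa [show j = k from Fin.ext h]

lemma Cne_succ (k : Fin n) (ω : MafiaΩ n) :
    Cne ((k:ℕ)+1) ω ↔ Cne (k:ℕ) ω ∨ cVer ω k ≠ cAdv ω k := by
  constructor
  · rintro ⟨j, hj, hne⟩
    rcases Nat.lt_succ_iff_lt_or_eq.1 hj with h | h
    · exact Or.inl ⟨j, h, hne⟩
    · rw [show j = k from Fin.ext h] at hne; exact Or.inr hne
  · rintro (⟨j, hj, hne⟩ | hne)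
    · exact ⟨j, by omega, hne⟩
    · exact ⟨k, by omega, hne⟩

lemma lastEq_succ (k : Fin n) (ω : MafiaΩ n) :
    lastEq ((k:ℕ)+1) ω ↔ cVer ω k = cAdv ω k := by
  constructor
  · intro h; exact h k rfl
  · intro h j hj
    rwa [show j = k from Fin.ext (by omega)]

lemma win_of_eq (k : Fin n) (ω : MafiaΩ n) (h : cVer ω k = cAdv ω k) :
    (ans ω k = corr ω k) ↔ S (k:ℕ) ω := by
  unfold ans corr resp S
  rw [if_pos h, fQ_succ, fQ_succ, h, add_right_inj, add_left_inj, eq_comm]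

lemma S_succ_of_eq (k : Fin n) (ω : MafiaΩ n) (h : cVer ω k = cAdv ω k) :
    S ((k:ℕ)+1) ω ↔ S (k:ℕ) ω := by
  unfold S
  rw [fQ_succ, fQ_succ, h, add_left_inj]

-- ===== flip maps =====
lemma z2_succ_ne (x : ZMod 2) : x + 1 ≠ x := by revert x; decide
lemma z2_key (x y v a : ZMod 2) (h : v ≠ a) : (x + v = y + a) ↔ ¬(x = y) := by
  revert x y v a; decide

def flipC (k : Fin n) (ω : MafiaΩ n) : MafiaΩ n :=
  (ω.1, ω.2.1, ω.2.2.1, ω.2.2.2.1,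
   Function.update ω.2.2.2.2.1 k (ω.2.2.2.2.1 k + 1), ω.2.2.2.2.2)

@[simp] lemma keyQ_flipC (k : Fin n) (ω : MafiaΩ n) : keyQ (flipC k ω) = keyQ ω := rfl
@[simp] lemma cAdv_flipC (k : Fin n) (ω : MafiaΩ n) : cAdv (flipC k ω) = cAdv ω := rfl
@[simp] lemma bAdv_flipC (k : Fin n) (ω : MafiaΩ n) : bAdv (flipC k ω) = bAdv ω := rfl
@[simp] lemma reg_flipC (k : Fin n) (ω : MafiaΩ n) : reg (flipC k ω) = reg ω := rfl
lemma cVer_flipC (k : Fin n) (ω : MafiaΩ n) :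
    cVer (flipC k ω) = Function.update (cVer ω) k (cVer ω k + 1) := rfl

lemma cVer_flipC_ne (k j : Fin n) (ω : MafiaΩ n) (h : j ≠ k) :
    cVer (flipC k ω) j = cVer ω j := Function.update_of_ne h _ _
lemma cVer_flipC_self (k : Fin n) (ω : MafiaΩ n) :
    cVer (flipC k ω) k = cVer ω k + 1 := Function.update_self _ _ _

lemma flipC_invol (k : Fin n) (ω : MafiaΩ n) : flipC k (flipC k ω) = ω := by
  have h : ∀ f : Fin n → ZMod 2,
      Function.update (Function.update f k (f k + 1)) k
        (Function.update f k (f k + 1) k + 1) = f := by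
    intro f
    rw [Function.update_self, Function.update_idem, z2_addc, Function.update_eq_self]
  show (ω.1, ω.2.1, ω.2.2.1, ω.2.2.2.1,
      Function.update (Function.update ω.2.2.2.2.1 k (ω.2.2.2.2.1 k + 1)) k
        (Function.update ω.2.2.2.2.1 k (ω.2.2.2.2.1 k + 1) k + 1), ω.2.2.2.2.2) = ω
  rw [h]

lemma fQ_cVer_flipC (k : Fin n) (ω : MafiaΩ n) (m : ℕ) (hm : m ≤ (k:ℕ)) :
    fQ (keyQ (flipC k ω)) (cVer (flipC k ω)) m = fQ (keyQ ω) (cVer ω) m :=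
  fQ_congr_c _ _ _ m (fun j hj =>
    cVer_flipC_ne k j ω (fun e => by rw [e] at hj; omega))

lemma ans_flipC (k j : Fin n) (ω : MafiaΩ n) (h : j ≠ k) :
    ans (flipC k ω) j = ans ω j := by
  unfold ans resp
  simp only [cVer_flipC_ne k j ω h, cAdv_flipC, bAdv_flipC, reg_flipC, keyQ_flipC]

lemma corr_flipC (k j : Fin n) (ω : MafiaΩ n) (h : (j:ℕ) < (k:ℕ)) :
    corr (flipC k ω) j = corr ω j := by
  have hne : j ≠ k := fun e => by rw [e] at h; omega
  have h1 : fQ (keyQ (flipC k ω)) (cVer (flipC k ω)) ((j:ℕ)+1)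
      = fQ (keyQ ω) (cVer ω) ((j:ℕ)+1) :=
    fQ_cVer_flipC k ω _ (by omega)
  unfold corr
  rw [h1, cVer_flipC_ne k j ω hne, reg_flipC]

lemma M_flipC (k : Fin n) (m : ℕ) (hm : m ≤ (k:ℕ)) (ω : MafiaΩ n) :
    M m (flipC k ω) ↔ M m ω := by
  have key : ∀ j : Fin n, (j:ℕ) < m →
      ((ans (flipC k ω) j = corr (flipC k ω) j) ↔ (ans ω j = corr ω j)) := by
    intro j hj
    rw [ans_flipC k j ω (fun e => by rw [e] at hj; omega), corr_flipC k j ω (by omega)]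
  exact ⟨fun h j hj => (key j hj).1 (h j hj), fun h j hj => (key j hj).2 (h j hj)⟩

lemma Cne_flipC (k : Fin n) (m : ℕ) (hm : m ≤ (k:ℕ)) (ω : MafiaΩ n) :
    Cne m (flipC k ω) ↔ Cne m ω := by
  unfold Cne
  constructor <;> rintro ⟨j, hj, hne⟩ <;> refine ⟨j, hj, ?_⟩
  · rwa [cVer_flipC_ne k j ω (fun e => by rw [e] at hj; omega)] at hne
  · rwa [cVer_flipC_ne k j ω (fun e => by rw [e] at hj; omega)]

lemma S_flipC (k : Fin n) (m : ℕ) (hm : m ≤ (k:ℕ)) (ω : MafiaΩ n) :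
    S m (flipC k ω) ↔ S m ω := by
  unfold S
  rw [fQ_cVer_flipC k ω m hm]
  simp only [keyQ_flipC, cAdv_flipC]

def flipQb (k : Fin n) (ω : MafiaΩ n) : MafiaΩ n :=
  (Function.update ω.1 k (ω.1 k + 1), ω.2.1, ω.2.2.1, ω.2.2.2.1, ω.2.2.2.2.1,
   Function.update ω.2.2.2.2.2 k (ω.2.2.2.2.2 k + ω.2.2.2.2.1 k))

@[simp] lemma cVer_flipQb (k : Fin n) (ω : MafiaΩ n) : cVer (flipQb k ω) = cVer ω := rfl
@[simp] lemma cAdv_flipQb (k : Fin n) (ω : MafiaΩ n) : cAdv (flipQb k ω) = cAdv ω := rfl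
@[simp] lemma reg_flipQb (k : Fin n) (ω : MafiaΩ n) : reg (flipQb k ω) = reg ω := rfl
lemma keyQ_flipQb (k : Fin n) (ω : MafiaΩ n) :
    keyQ (flipQb k ω) = Function.update (keyQ ω) k (keyQ ω k + 1) := rfl
lemma bAdv_flipQb (k : Fin n) (ω : MafiaΩ n) :
    bAdv (flipQb k ω) = Function.update (bAdv ω) k (bAdv ω k + cVer ω k) := rfl

lemma flipQb_invol (k : Fin n) (ω : MafiaΩ n) : flipQb k (flipQb k ω) = ω := by
  have h : ∀ (f : Fin n → ZMod 2) (c : ZMod 2),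
      Function.update (Function.update f k (f k + c)) k
        (Function.update f k (f k + c) k + c) = f := by
    intro f c
    rw [Function.update_self, Function.update_idem, z2_addc, Function.update_eq_self]
  show (Function.update (Function.update ω.1 k (ω.1 k + 1)) k
          (Function.update ω.1 k (ω.1 k + 1) k + 1),
        ω.2.1, ω.2.2.1, ω.2.2.2.1, ω.2.2.2.2.1,
        Function.update (Function.update ω.2.2.2.2.2 k (ω.2.2.2.2.2 k + ω.2.2.2.2.1 k)) k
          (Function.update ω.2.2.2.2.2 k (ω.2.2.2.2.2 k + ω.2.2.2.2.1 k) k + ω.2.2.2.2.1 k))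
      = ω
  rw [h, h]

lemma fQ_keyQ_flipQb (k : Fin n) (ω : MafiaΩ n) (c : Fin n → ZMod 2) (m : ℕ)
    (hm : m ≤ (k:ℕ)) :
    fQ (keyQ (flipQb k ω)) c m = fQ (keyQ ω) c m :=
  fQ_congr_Q _ _ _ m (fun j hj => by
    rw [keyQ_flipQb]
    exact Function.update_of_ne (fun e => by rw [e] at hj; omega) _ _)

lemma fQ_flipQb_succ (k : Fin n) (ω : MafiaΩ n) (c : Fin n → ZMod 2) :
    fQ (keyQ (flipQb k ω)) c ((k:ℕ)+1) = fQ (keyQ ω) c ((k:ℕ)+1) + c k := by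
  rw [fQ_succ, fQ_succ,
    fQ_congr_Q (keyQ ω) (keyQ (flipQb k ω)) c (k:ℕ)
      (fun l hl => by
        rw [keyQ_flipQb]
        exact Function.update_of_ne (fun e => by rw [e] at hl; omega) _ _),
    keyQ_flipQb, Function.update_self]
  ring

lemma ans_flipQb (k j : Fin n) (ω : MafiaΩ n) (h : (j:ℕ) < (k:ℕ)) :
    ans (flipQb k ω) j = ans ω j := by
  have hne : j ≠ k := fun e => by rw [e] at h; omega
  unfold ans resp
  simp only [cVer_flipQb, cAdv_flipQb, reg_flipQb, bAdv_flipQb,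
    fQ_keyQ_flipQb k ω (cAdv ω) ((j:ℕ)+1) (by omega),
    Function.update_of_ne hne]

lemma corr_flipQb (k j : Fin n) (ω : MafiaΩ n) (h : (j:ℕ) < (k:ℕ)) :
    corr (flipQb k ω) j = corr ω j := by
  unfold corr
  rw [fQ_keyQ_flipQb k ω (cVer (flipQb k ω)) ((j:ℕ)+1) (by omega)]
  simp only [cVer_flipQb, reg_flipQb]

lemma M_flipQb (k : Fin n) (m : ℕ) (hm : m ≤ (k:ℕ)) (ω : MafiaΩ n) :
    M m (flipQb k ω) ↔ M m ω := by
  have key : ∀ j : Fin n, (j:ℕ) < m →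
      ((ans (flipQb k ω) j = corr (flipQb k ω) j) ↔ (ans ω j = corr ω j)) := by
    intro j hj
    rw [ans_flipQb k j ω (by omega), corr_flipQb k j ω (by omega)]
  exact ⟨fun h j hj => (key j hj).1 (h j hj), fun h j hj => (key j hj).2 (h j hj)⟩

lemma Cne_flipQb (k : Fin n) (m : ℕ) (ω : MafiaΩ n) :
    Cne m (flipQb k ω) ↔ Cne m ω := Iff.rfl

lemma win_flipQb_k (k : Fin n) (ω : MafiaΩ n) (hne : cVer ω k ≠ cAdv ω k) :
    (ans (flipQb k ω) k = corr (flipQb k ω) k) ↔ (ans ω k = corr ω k) := by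
  unfold ans corr
  simp only [cVer_flipQb, cAdv_flipQb, reg_flipQb, bAdv_flipQb]
  rw [if_neg hne, @if_neg (cVer ω k = cAdv ω k) (ZMod.decidableEq 2 (cVer (flipQb k ω) k) (cAdv (flipQb k ω) k)) hne, fQ_flipQb_succ k ω (cVer ω), Function.update_self,
    ← add_assoc, add_left_inj]

lemma S_flipQb_k (k : Fin n) (ω : MafiaΩ n) (hne : cVer ω k ≠ cAdv ω k) :
    S ((k:ℕ)+1) (flipQb k ω) ↔ ¬ S ((k:ℕ)+1) ω := by
  unfold S
  simp only [cVer_flipQb, cAdv_flipQb]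
  rw [fQ_flipQb_succ k ω (cVer ω), fQ_flipQb_succ k ω (cAdv ω)]
  exact z2_key _ _ _ _ hne

-- ===== counting lemmas =====

open Classical in
lemma cnt_invol (φ : MafiaΩ n → MafiaΩ n) (hφ : ∀ ω, φ (φ ω) = ω)
    (P Q : MafiaΩ n → Prop) (h1 : ∀ ω, P ω → Q (φ ω)) (h2 : ∀ ω, Q ω → P (φ ω)) :
    cnt n P = cnt n Q := by
  unfold cnt; exact card_filter_eq_of_invol φ hφ P Q h1 h2

open Classical in
lemma cnt_true : cnt n (fun _ => True) = Fintype.card (MafiaΩ n) := by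
  unfold cnt
  rw [Finset.card_filter]
  simp [Finset.card_univ]

lemma cnt_compl (E : MafiaΩ n → Prop) :
    cnt n E + cnt n (fun ω => ¬ E ω) = Fintype.card (MafiaΩ n) := by
  have h := cnt_split (n := n) (fun _ => True) E
  rw [cnt_true] at h
  have e1 : cnt n (fun ω => True ∧ E ω) = cnt n E := cnt_congr (fun ω => by tauto)
  have e2 : cnt n (fun ω => True ∧ ¬ E ω) = cnt n (fun ω => ¬ E ω) :=
    cnt_congr (fun ω => by tauto)
  omega

lemma cnt_notCne_zero : cnt n (fun ω => ¬ Cne 0 ω) = Fintype.card (MafiaΩ n) := by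
  have h : cnt n (fun ω => ¬ Cne 0 ω) = cnt n (fun _ => True) :=
    cnt_congr (fun ω => by
      simp only [iff_true]
      rintro ⟨j, hj, -⟩; omega)
  rw [h, cnt_true]

lemma cnt_notCne_succ (k : Fin n) :
    2 * cnt n (fun ω => ¬ Cne ((k:ℕ)+1) ω) = cnt n (fun ω => ¬ Cne (k:ℕ) ω) := by
  have h1 : cnt n (fun ω => ¬ Cne ((k:ℕ)+1) ω)
      = cnt n (fun ω => ¬ Cne (k:ℕ) ω ∧ cVer ω k = cAdv ω k) :=
    cnt_congr (fun ω => by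
      rw [Cne_succ]
      constructor
      · intro h
        exact ⟨fun hc => h (Or.inl hc), by_contra fun hne => h (Or.inr hne)⟩
      · rintro ⟨ha, hb⟩ (hc | hne)
        · exact ha hc
        · exact hne hb)
  have h2 : cnt n (fun ω => ¬ Cne (k:ℕ) ω ∧ cVer ω k = cAdv ω k)
      = cnt n (fun ω => ¬ Cne (k:ℕ) ω ∧ ¬ (cVer ω k = cAdv ω k)) := by
    refine cnt_invol (flipC k) (flipC_invol k) _ _ ?_ ?_
    · rintro ω ⟨hc, he⟩
      refine ⟨fun h => hc ((Cne_flipC k k le_rfl ω).1 h), ?_⟩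
      rw [cVer_flipC_self, cAdv_flipC, ← he]
      exact z2_succ_ne _
    · rintro ω ⟨hc, hne⟩
      refine ⟨fun h => hc ((Cne_flipC k k le_rfl ω).1 h), ?_⟩
      rw [cVer_flipC_self, cAdv_flipC]
      exact (z2_flip_ne_iff _ _).2 hne
  have h3 := cnt_split (n := n) (fun ω => ¬ Cne (k:ℕ) ω) (fun ω => cVer ω k = cAdv ω k)
  omega

lemma cnt_notCne : ∀ i : ℕ, i ≤ n →
    2^i * cnt n (fun ω => ¬ Cne i ω) = Fintype.card (MafiaΩ n)
  | 0, _ => by simpa using cnt_notCne_zero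
  | (m+1), h => by
    have hk : 2 * cnt n (fun ω => ¬ Cne (m+1) ω) = cnt n (fun ω => ¬ Cne m ω) :=
      cnt_notCne_succ ⟨m, by omega⟩
    have ih := cnt_notCne m (by omega)
    calc 2^(m+1) * cnt n (fun ω => ¬ Cne (m+1) ω)
        = 2^m * (2 * cnt n (fun ω => ¬ Cne (m+1) ω)) := by ring
      _ = 2^m * cnt n (fun ω => ¬ Cne m ω) := by rw [hk]
      _ = Fintype.card (MafiaΩ n) := ih

lemma card_pos : 0 < Fintype.card (MafiaΩ n) := Fintype.card_pos

lemma cardQ_ne : ((Fintype.card (MafiaΩ n) : ℚ)) ≠ 0 :=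
  Nat.cast_ne_zero.2 card_pos.ne'

lemma pr_Cne (i : ℕ) (hi : i ≤ n) : pr n (Cne i) = 1 - (1/2:ℚ)^i := by
  have h1 := cnt_notCne i hi
  have h2 := cnt_compl (n := n) (Cne i)
  have e : cnt n (fun ω => ¬ Cne i ω) = cnt n (fun ω => ¬ (Cne i) ω) := rfl
  rw [pr_def, div_eq_iff (cardQ_ne)]
  have h1q : (2:ℚ)^i * (cnt n (fun ω => ¬ Cne i ω) : ℚ)
      = (Fintype.card (MafiaΩ n) : ℚ) := by exact_mod_cast h1
  have h2q : (cnt n (Cne i) : ℚ) + (cnt n (fun ω => ¬ Cne i ω) : ℚ)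
      = (Fintype.card (MafiaΩ n) : ℚ) := by exact_mod_cast h2
  have hp : ((1:ℚ)/2)^i * (2:ℚ)^i = 1 := by
    rw [← mul_pow]; norm_num
  linear_combination h2q - (1/2:ℚ)^i * h1q
    + ((cnt n (fun ω => ¬ Cne i ω) : ℚ)) * hp

lemma cnt_R2 (k : Fin n) :
    2 * cnt n (fun ω => lastEq ((k:ℕ)+1) ω ∧ (Cne ((k:ℕ)+1) ω ∧ M ((k:ℕ)+1) ω))
      = cnt n (fun ω => S (k:ℕ) ω ∧ (Cne (k:ℕ) ω ∧ M (k:ℕ) ω)) := by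
  have h1 : cnt n (fun ω => lastEq ((k:ℕ)+1) ω ∧ (Cne ((k:ℕ)+1) ω ∧ M ((k:ℕ)+1) ω))
      = cnt n (fun ω => (S (k:ℕ) ω ∧ (Cne (k:ℕ) ω ∧ M (k:ℕ) ω)) ∧ cVer ω k = cAdv ω k) :=
    cnt_congr (fun ω => by
      rw [lastEq_succ, Cne_succ, M_succ]
      constructor
      · rintro ⟨he, hc, hm, hw⟩
        exact ⟨⟨(win_of_eq k ω he).1 hw, hc.resolve_right (fun hne => hne he), hm⟩, he⟩
      · rintro ⟨⟨hS, hc, hm⟩, he⟩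
        exact ⟨he, Or.inl hc, hm, (win_of_eq k ω he).2 hS⟩)
  have h2 : cnt n (fun ω => (S (k:ℕ) ω ∧ (Cne (k:ℕ) ω ∧ M (k:ℕ) ω)) ∧ cVer ω k = cAdv ω k)
      = cnt n (fun ω => (S (k:ℕ) ω ∧ (Cne (k:ℕ) ω ∧ M (k:ℕ) ω)) ∧ ¬ (cVer ω k = cAdv ω k)) := by
    refine cnt_invol (flipC k) (flipC_invol k) _ _ ?_ ?_
    · rintro ω ⟨⟨hS, hc, hm⟩, he⟩
      refine ⟨⟨(S_flipC k _ le_rfl ω).2 hS, (Cne_flipC k _ le_rfl ω).2 hc,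
        (M_flipC k _ le_rfl ω).2 hm⟩, ?_⟩
      rw [cVer_flipC_self, cAdv_flipC, ← he]
      exact z2_succ_ne _
    · rintro ω ⟨⟨hS, hc, hm⟩, hne⟩
      refine ⟨⟨(S_flipC k _ le_rfl ω).2 hS, (Cne_flipC k _ le_rfl ω).2 hc,
        (M_flipC k _ le_rfl ω).2 hm⟩, ?_⟩
      rw [cVer_flipC_self, cAdv_flipC]
      exact (z2_flip_ne_iff _ _).2 hne
  have h3 := cnt_split (n := n) (fun ω => S (k:ℕ) ω ∧ (Cne (k:ℕ) ω ∧ M (k:ℕ) ω))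
    (fun ω => cVer ω k = cAdv ω k)
  omega

lemma cnt_R1 (k : Fin n) :
    2 * cnt n (fun ω => S ((k:ℕ)+1) ω ∧ (Cne ((k:ℕ)+1) ω ∧ M ((k:ℕ)+1) ω))
      = cnt n (fun ω => Cne ((k:ℕ)+1) ω ∧ M ((k:ℕ)+1) ω)
        + cnt n (fun ω => lastEq ((k:ℕ)+1) ω ∧ (Cne ((k:ℕ)+1) ω ∧ M ((k:ℕ)+1) ω)) := by
  have hSA := cnt_split (n:=n)
    (fun ω => S ((k:ℕ)+1) ω ∧ (Cne ((k:ℕ)+1) ω ∧ M ((k:ℕ)+1) ω))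
    (fun ω => cVer ω k = cAdv ω k)
  have hA := cnt_split (n:=n) (fun ω => Cne ((k:ℕ)+1) ω ∧ M ((k:ℕ)+1) ω)
    (fun ω => cVer ω k = cAdv ω k)
  have e1 : cnt n (fun ω => (S ((k:ℕ)+1) ω ∧ (Cne ((k:ℕ)+1) ω ∧ M ((k:ℕ)+1) ω))
        ∧ cVer ω k = cAdv ω k)
      = cnt n (fun ω => (Cne ((k:ℕ)+1) ω ∧ M ((k:ℕ)+1) ω) ∧ cVer ω k = cAdv ω k) :=
    cnt_congr (fun ω => by
      constructor
      · rintro ⟨⟨-, hA⟩, he⟩; exact ⟨hA, he⟩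
      · rintro ⟨⟨hc, hm⟩, he⟩
        refine ⟨⟨?_, hc, hm⟩, he⟩
        have hw := ((M_succ k ω).1 hm).2
        exact (S_succ_of_eq k ω he).2 ((win_of_eq k ω he).1 hw))
  have e2 : cnt n (fun ω => (S ((k:ℕ)+1) ω ∧ (Cne ((k:ℕ)+1) ω ∧ M ((k:ℕ)+1) ω))
        ∧ ¬ (cVer ω k = cAdv ω k))
      = cnt n (fun ω => (¬ S ((k:ℕ)+1) ω ∧ (Cne ((k:ℕ)+1) ω ∧ M ((k:ℕ)+1) ω))
        ∧ ¬ (cVer ω k = cAdv ω k)) := by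
    refine cnt_invol (flipQb k) (flipQb_invol k) _ _ ?_ ?_
    · rintro ω ⟨⟨hS, hc, hm⟩, hne⟩
      have hmk := (M_succ k ω).1 hm
      refine ⟨⟨fun h => (S_flipQb_k k ω hne).1 h hS, (Cne_flipQb k _ ω).2 hc,
        (M_succ k (flipQb k ω)).2 ⟨(M_flipQb k k le_rfl ω).2 hmk.1,
          (win_flipQb_k k ω hne).2 hmk.2⟩⟩, hne⟩
    · rintro ω ⟨⟨hS, hc, hm⟩, hne⟩
      have hmk := (M_succ k ω).1 hm
      refine ⟨⟨(S_flipQb_k k ω hne).2 hS, (Cne_flipQb k _ ω).2 hc,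
        (M_succ k (flipQb k ω)).2 ⟨(M_flipQb k k le_rfl ω).2 hmk.1,
          (win_flipQb_k k ω hne).2 hmk.2⟩⟩, hne⟩
  have hAn := cnt_split (n:=n)
    (fun ω => (Cne ((k:ℕ)+1) ω ∧ M ((k:ℕ)+1) ω) ∧ ¬ (cVer ω k = cAdv ω k))
    (fun ω => S ((k:ℕ)+1) ω)
  have e3 : cnt n (fun ω => ((Cne ((k:ℕ)+1) ω ∧ M ((k:ℕ)+1) ω) ∧ ¬ (cVer ω k = cAdv ω k))
        ∧ S ((k:ℕ)+1) ω)
      = cnt n (fun ω => (S ((k:ℕ)+1) ω ∧ (Cne ((k:ℕ)+1) ω ∧ M ((k:ℕ)+1) ω))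
        ∧ ¬ (cVer ω k = cAdv ω k)) :=
    cnt_congr (fun ω => by tauto)
  have e4 : cnt n (fun ω => ((Cne ((k:ℕ)+1) ω ∧ M ((k:ℕ)+1) ω) ∧ ¬ (cVer ω k = cAdv ω k))
        ∧ ¬ S ((k:ℕ)+1) ω)
      = cnt n (fun ω => (¬ S ((k:ℕ)+1) ω ∧ (Cne ((k:ℕ)+1) ω ∧ M ((k:ℕ)+1) ω))
        ∧ ¬ (cVer ω k = cAdv ω k)) :=
    cnt_congr (fun ω => by tauto)
  have e5 : cnt n (fun ω => lastEq ((k:ℕ)+1) ω ∧ (Cne ((k:ℕ)+1) ω ∧ M ((k:ℕ)+1) ω))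
      = cnt n (fun ω => (Cne ((k:ℕ)+1) ω ∧ M ((k:ℕ)+1) ω) ∧ cVer ω k = cAdv ω k) :=
    cnt_congr (fun ω => by rw [lastEq_succ]; tauto)
  omega

open Classical in
lemma cnt_A1_pos (hn : 1 ≤ n) : cnt n (fun ω => Cne 1 ω ∧ M 1 ω) ≠ 0 := by
  unfold cnt
  refine Finset.card_ne_zero_of_mem
    (a := ((0, 0, 0, 0, fun j : Fin n => if (j:ℕ) = 0 then (1:ZMod 2) else 0, 0) : MafiaΩ n)) ?_
  simp only [Finset.mem_filter]
  refine ⟨Finset.mem_univ _, ⟨⟨0, hn⟩, by norm_num, by simp [cVer, cAdv]⟩, ?_⟩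
  intro j hj
  have hj0 : (j:ℕ) = 0 := by omega
  simp [ans, corr, resp, cVer, cAdv, bAdv, reg, reg0, reg1, keyQ, fQ, hj0]

open Classical in
lemma cpr_eq (A B : MafiaΩ n → Prop) :
    cpr n A B = (cnt n (fun ω => A ω ∧ B ω) : ℚ) / (cnt n B : ℚ) := by
  unfold cpr
  rw [pr_def, pr_def, div_div_div_cancel_right₀ cardQ_ne]

lemma cnt_ne_of_pr_ne {E : MafiaΩ n → Prop} (h : pr n E ≠ 0) : (cnt n E : ℚ) ≠ 0 := by
  rw [pr_def] at h
  intro h0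
  exact h (by rw [h0, zero_div])

end Mafia




open Mafia in
/-- the decomposition of `Pr(S_i | C_i ≠ C̃_i, M_i)` via the
probability that the `i`-th challenges agree (Lemma 2 of the paper), together
with the stopping condition, whenever all the involved conditional
probabilities are well defined. -/
theorem mafia_fraud_S_recursion (n : ℕ) (hn : 1 ≤ n) :
    (∀ i, 2 ≤ i → i ≤ n →
      pr n (Cne i) ≠ 0 →
      pr n (Cne (i - 1)) ≠ 0 →
      pr n (fun ω => Cne (i - 1) ω ∧ M (i - 1) ω) ≠ 0 →
      pr n (fun ω => Cne i ω ∧ M i ω) ≠ 0 →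
      (cpr n (S i) (fun ω => Cne i ω ∧ M i ω)
          = 1 / 2 + (1 / 2) * cpr n (lastEq i) (fun ω => Cne i ω ∧ M i ω)) ∧
      (cpr n (lastEq i) (fun ω => Cne i ω ∧ M i ω)
          = (cpr n (S (i - 1)) (fun ω => Cne (i - 1) ω ∧ M (i - 1) ω)
              * cpr n (M (i - 1)) (Cne (i - 1))
              * (1 / 2 - (1 / 2) ^ i))
            / (cpr n (M i) (Cne i) * (1 - (1 / 2) ^ i)))) ∧
    cpr n (S 1) (fun ω => Cne 1 ω ∧ M 1 ω) = 1 / 2 := by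
  constructor
  · intro i h2i hin hCne hCne' hA' hA
    have hklt : i - 1 < n := by omega
    set k : Fin n := ⟨i - 1, hklt⟩ with hkdef
    have hk0 : (k:ℕ) = i - 1 := rfl
    have hk1 : (k:ℕ) + 1 = i := by show i - 1 + 1 = i; omega
    have R1 := cnt_R1 (n:=n) k
    have R2 := cnt_R2 (n:=n) k
    rw [hk1] at R1 R2
    rw [hk0] at R2
    have hcA : (cnt n (fun ω => Cne i ω ∧ M i ω) : ℚ) ≠ 0 := cnt_ne_of_pr_ne hA
    have hcA' : (cnt n (fun ω => Cne (i-1) ω ∧ M (i-1) ω) : ℚ) ≠ 0 := cnt_ne_of_pr_ne hA'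
    have R1q : (2:ℚ) * (cnt n (fun ω => S i ω ∧ (Cne i ω ∧ M i ω)) : ℚ)
        = (cnt n (fun ω => Cne i ω ∧ M i ω) : ℚ)
          + (cnt n (fun ω => lastEq i ω ∧ (Cne i ω ∧ M i ω)) : ℚ) := by exact_mod_cast R1
    have R2q : (2:ℚ) * (cnt n (fun ω => lastEq i ω ∧ (Cne i ω ∧ M i ω)) : ℚ)
        = (cnt n (fun ω => S (i-1) ω ∧ (Cne (i-1) ω ∧ M (i-1) ω)) : ℚ) := by
      exact_mod_cast R2
    constructor
    · rw [cpr_eq, cpr_eq]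
      field_simp
      linear_combination R1q
    · rw [cpr_eq, cpr_eq, cpr_eq, cpr_eq]
      have eMC : cnt n (fun ω => M i ω ∧ Cne i ω) = cnt n (fun ω => Cne i ω ∧ M i ω) :=
        cnt_congr (fun ω => and_comm)
      have eMC' : cnt n (fun ω => M (i-1) ω ∧ Cne (i-1) ω)
          = cnt n (fun ω => Cne (i-1) ω ∧ M (i-1) ω) := cnt_congr (fun ω => and_comm)
      rw [eMC, eMC']
      have hCval : (cnt n (Cne i) : ℚ)
          = (1 - (1/2:ℚ)^i) * (Fintype.card (MafiaΩ n) : ℚ) := by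
        have h := pr_Cne (n:=n) i hin
        rw [pr_def] at h
        exact (div_eq_iff cardQ_ne).1 h
      have hCval' : (cnt n (Cne (i-1)) : ℚ)
          = (1 - (1/2:ℚ)^(i-1)) * (Fintype.card (MafiaΩ n) : ℚ) := by
        have h := pr_Cne (n:=n) (i-1) (by omega)
        rw [pr_def] at h
        exact (div_eq_iff cardQ_ne).1 h
      rw [hCval, hCval']
      have hu : (1 - (1/2:ℚ)^i) ≠ 0 := by
        have h := pow_lt_one₀ (by norm_num : (0:ℚ) ≤ 1/2) (by norm_num) (by omega : i ≠ 0)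
        exact sub_ne_zero.2 (ne_of_gt h)
      have hu' : (1 - (1/2:ℚ)^(i-1)) ≠ 0 := by
        have h := pow_lt_one₀ (by norm_num : (0:ℚ) ≤ 1/2) (by norm_num) (by omega : i - 1 ≠ 0)
        exact sub_ne_zero.2 (ne_of_gt h)
      have hsplit : (1/2:ℚ) - (1/2)^i = (1/2) * (1 - (1/2)^(i-1)) := by
        have hpow : (1/2:ℚ)^i = (1/2) * (1/2)^(i-1) := by
          rw [← pow_succ']
          congr 1
          omega
        rw [hpow]; ring
      rw [hsplit, ← R2q]
      set a := (cnt n (fun ω => lastEq i ω ∧ (Cne i ω ∧ M i ω)) : ℚ) with ha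
      set A := (cnt n (fun ω => Cne i ω ∧ M i ω) : ℚ) with hA2
      set A' := (cnt n (fun ω => Cne (i-1) ω ∧ M (i-1) ω) : ℚ) with hA2'
      set N := (Fintype.card (MafiaΩ n) : ℚ) with hN2
      set u := (1 - (1/2:ℚ)^i) with hu2
      set u' := (1 - (1/2:ℚ)^(i-1)) with hu2'
      have hN : N ≠ 0 := cardQ_ne
      have hY : A / (u * N) * u ≠ 0 :=
        mul_ne_zero (div_ne_zero hcA (mul_ne_zero hu hN)) hu
      rw [div_eq_div_iff hcA hY]
      field_simp
  · have R1 := cnt_R1 (n:=n) ⟨0, hn⟩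
    have hk1 : ((⟨0, hn⟩ : Fin n):ℕ) + 1 = 1 := rfl
    rw [hk1] at R1
    have hL0 : cnt n (fun ω => lastEq 1 ω ∧ (Cne 1 ω ∧ M 1 ω)) = 0 := by
      have hempty : ∀ ω : MafiaΩ n, ¬ (lastEq 1 ω ∧ (Cne 1 ω ∧ M 1 ω)) := by
        rintro ω ⟨hL, ⟨j, hj, hne⟩, -⟩
        exact hne (hL j (by omega))
      have h1 : cnt n (fun ω => lastEq 1 ω ∧ (Cne 1 ω ∧ M 1 ω))
          = cnt n (fun _ => False) := cnt_congr (fun ω => by simpa using hempty ω)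
      have h2 : cnt n (fun _ : MafiaΩ n => False) = 0 := by
        unfold cnt; simp
      rw [h1, h2]
    have hA1q : (cnt n (fun ω => Cne 1 ω ∧ M 1 ω) : ℚ) ≠ 0 :=
      Nat.cast_ne_zero.2 (cnt_A1_pos hn)
    rw [cpr_eq, div_eq_iff hA1q]
    have R1q : (2:ℚ) * (cnt n (fun ω => S 1 ω ∧ (Cne 1 ω ∧ M 1 ω)) : ℚ)
        = (cnt n (fun ω => Cne 1 ω ∧ M 1 ω) : ℚ) := by
      have : 2 * cnt n (fun ω => S 1 ω ∧ (Cne 1 ω ∧ M 1 ω))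
          = cnt n (fun ω => Cne 1 ω ∧ M 1 ω) := by omega
      exact_mod_cast this
    linarith
end

section
/- Let q, c, c̃, r₀, r₁ be five independent uniformly distributed random bits, and let f, g ∈ {0,1} be fixed bits. Define the correct response e = (if c = 0 then r₀ else r₁) ⊕ f ⊕ (q ∧ c) and the malicious prover's early reply a = (if c̃ = 0 then r₀ else r₁) ⊕ g ⊕ (q ∧ c̃). Then Pr(a = e) = 3/4 if g = f, and Pr(a = e) = 1/4 if g ≠ f. (This is the single-round distance-fraud success probability conditioned on the current guess of f_Q(C_{i−1}) being correct, respectively incorrect.) -/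
/-- single-round distance-fraud success probability. Bits are
elements of `ZMod 2` (XOR is `+`, AND is `*`).  A sample point is
`(q, c, c̃, r₀, r₁)`, the five independent uniform bits; `f` is the true value
of `f_Q(C_{i-1})` and `g` the malicious prover's guess of it.  The correct
response is `e = R^c ⊕ f ⊕ (q ∧ c)` and the early reply is
`a = R^{c̃} ⊕ g ⊕ (q ∧ c̃)`.  Then `Pr(a = e) = 3/4` if `g = f` and
`Pr(a = e) = 1/4` if `g ≠ f`. -/
theorem distance_fraud_single_round (f g : ZMod 2) :
    (g = f →
      ((((Finset.univ : Finset (ZMod 2 × ZMod 2 × ZMod 2 × ZMod 2 × ZMod 2)).filter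
          (fun p =>
            (if p.2.2.1 = 0 then p.2.2.2.1 else p.2.2.2.2) + g + p.1 * p.2.2.1
              = (if p.2.1 = 0 then p.2.2.2.1 else p.2.2.2.2) + f + p.1 * p.2.1)).card : ℚ)
        / ((Finset.univ : Finset (ZMod 2 × ZMod 2 × ZMod 2 × ZMod 2 × ZMod 2)).card : ℚ)
        = 3 / 4)) ∧
    (g ≠ f →
      ((((Finset.univ : Finset (ZMod 2 × ZMod 2 × ZMod 2 × ZMod 2 × ZMod 2)).filter
          (fun p =>
            (if p.2.2.1 = 0 then p.2.2.2.1 else p.2.2.2.2) + g + p.1 * p.2.2.1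
              = (if p.2.1 = 0 then p.2.2.2.1 else p.2.2.2.2) + f + p.1 * p.2.1)).card : ℚ)
        / ((Finset.univ : Finset (ZMod 2 × ZMod 2 × ZMod 2 × ZMod 2 × ZMod 2)).card : ℚ)
        = 1 / 4)) := by
  have hcard : ((Finset.univ : Finset (ZMod 2 × ZMod 2 × ZMod 2 × ZMod 2 × ZMod 2)).card) = 32 := by decide
  constructor <;> intro h
  · subst h
    have : (((Finset.univ : Finset (ZMod 2 × ZMod 2 × ZMod 2 × ZMod 2 × ZMod 2)).filter
          (fun p =>
            (if p.2.2.1 = 0 then p.2.2.2.1 else p.2.2.2.2) + g + p.1 * p.2.2.1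
              = (if p.2.1 = 0 then p.2.2.2.1 else p.2.2.2.2) + g + p.1 * p.2.1)).card) = 24 := by
      fin_cases g <;> decide
    rw [this, hcard]; norm_num
  · have hg : g = f + 1 := by
      revert h; revert f g; decide
    subst hg
    have : (((Finset.univ : Finset (ZMod 2 × ZMod 2 × ZMod 2 × ZMod 2 × ZMod 2)).filter
          (fun p =>
            (if p.2.2.1 = 0 then p.2.2.2.1 else p.2.2.2.2) + (f + 1) + p.1 * p.2.2.1
              = (if p.2.1 = 0 then p.2.2.2.1 else p.2.2.2.2) + f + p.1 * p.2.1)).card) = 8 := by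
      fin_cases f <;> decide
    rw [this, hcard]; norm_num
end
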